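/- For every integer n ≥ 1, the number z(n) of zigzag stacks on [n] satisfies z(n) = Σ_{k=1}^{n} c_k · Σ_{d₁+d₂+⋯+d_k = n−k, d_i ≥ 0} z(d₁)z(d₂)⋯z(d_k), where c_k denotes the number of connected zigzag stacks on [k] (so c₁ = 1 and c_k = k−1 for k ≥ 2) and z(0) = 1. -/

import Mathlib

open PowerSeries

namespace Paper

/-- The arc set of a diagram: a finite set of pairs `(i,j)`. -/
abbrev Arcs := Finset (ℕ × ℕ)

/-- A diagram on `[n] = {1,…,n}`: every arc `(i,j)` satisfies `1 ≤ i < j ≤ n`. -/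
def IsDiagram (n : ℕ) (A : Arcs) : Prop :=
  ∀ p ∈ A, 1 ≤ p.1 ∧ p.1 < p.2 ∧ p.2 ≤ n

/-- Two arcs `p = (i₁,j₁)` and `q = (i₂,j₂)` cross if `i₁ < i₂ < j₁ < j₂`. -/
def Crossing (p q : ℕ × ℕ) : Prop :=
  p.1 < q.1 ∧ q.1 < p.2 ∧ p.2 < q.2

/-- A stack on `[n]`: a diagram with no two crossing arcs. -/
def IsStack (n : ℕ) (A : Arcs) : Prop :=
  IsDiagram n A ∧ ∀ p ∈ A, ∀ q ∈ A, ¬ Crossing p q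

/-- Left-degree of vertex `v`: number of arcs `(u,v)` with `u < v`. -/
def ld (A : Arcs) (v : ℕ) : ℕ := (A.filter fun p => p.2 = v).card

/-- Right-degree of vertex `v`: number of arcs `(v,w)` with `v < w`. -/
def rd (A : Arcs) (v : ℕ) : ℕ := (A.filter fun p => p.1 = v).card

/-- Degree of a vertex. -/
def deg (A : Arcs) (v : ℕ) : ℕ := ld A v + rd A v

/-- A zigzag stack: a stack where every vertex has degree ≤ 2 and no vertex has both
positive left-degree and positive right-degree. -/
def IsZigzag (n : ℕ) (A : Arcs) : Prop :=
  IsStack n A ∧ (∀ v, deg A v ≤ 2) ∧ ∀ v, ¬ (1 ≤ ld A v ∧ 1 ≤ rd A v)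

/-- Adjacency in the underlying graph of a diagram. -/
def adj (A : Arcs) (u v : ℕ) : Prop := (u, v) ∈ A ∨ (v, u) ∈ A

/-- `v` lies in the primary component (connected component of vertex 1). -/
def inPrimary (A : Arcs) (v : ℕ) : Prop := Relation.ReflTransGen (adj A) 1 v

/-- The underlying graph on vertex set `[n]` is connected. -/
def ConnectedOn (n : ℕ) (A : Arcs) : Prop :=
  ∀ u v, 1 ≤ u → u ≤ n → 1 ≤ v → v ≤ n → Relation.ReflTransGen (adj A) u v

/-- Number of stacks on `[n]`. -/
noncomputable def stackCount (n : ℕ) : ℕ := Nat.card {A : Arcs // IsStack n A}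

/-- Number of zigzag stacks on `[n]`. -/
noncomputable def zigzagCount (n : ℕ) : ℕ := Nat.card {A : Arcs // IsZigzag n A}

/-- Number of connected zigzag stacks on `[n]`. -/
noncomputable def connZigzagCount (n : ℕ) : ℕ :=
  Nat.card {A : Arcs // IsZigzag n A ∧ ConnectedOn n A}

/-- The ordinary generating function of the numbers of zigzag stacks. -/
noncomputable def Zgf : PowerSeries ℚ := PowerSeries.mk fun n => (zigzagCount n : ℚ)

/-- The power series variable over ℚ. -/
noncomputable def Xq : PowerSeries ℚ := PowerSeries.X

/-- An `m`-reduced zigzag stack on `[n]`: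
(1) `ld(i) + rd(i+m−1) ≤ 2` for `1 ≤ i ≤ n−m+1` (written additively);
(2) if `1 ≤ i < j ≤ n` with `ld(i) > 0` and `rd(j) > 0` then `j − i ≥ m−1`. -/
def MRed (m n : ℕ) (A : Arcs) : Prop :=
  IsZigzag n A ∧
  (∀ i, 1 ≤ i → i + m ≤ n + 1 → ld A i + rd A (i + m - 1) ≤ 2) ∧
  (∀ i j, 1 ≤ i → i < j → j ≤ n → 0 < ld A i → 0 < rd A j → i + m ≤ j + 1)

/-- An `m`-regular linear stack on `[n]`: every arc has length ≥ m and every vertex has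
degree ≤ 2. -/
def RegLinear (m n : ℕ) (A : Arcs) : Prop :=
  IsStack n A ∧ (∀ p ∈ A, p.1 + m ≤ p.2) ∧ ∀ v, deg A v ≤ 2

/-- Number of `m`-reduced zigzag stacks on `[n]`. -/
noncomputable def zm (m n : ℕ) : ℕ := Nat.card {A : Arcs // MRed m n A}

/-- Number of `m`-regular linear stacks on `[n]`. -/
noncomputable def rmc (m n : ℕ) : ℕ := Nat.card {A : Arcs // RegLinear m n A}

/-- Generating function of `m`-reduced zigzag stacks. -/
noncomputable def Zm (m : ℕ) : PowerSeries ℚ := PowerSeries.mk fun n => (zm m n : ℚ)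

/-- Generating function of `m`-regular linear stacks. -/
noncomputable def Rm (m : ℕ) : PowerSeries ℚ := PowerSeries.mk fun n => (rmc m n : ℚ)

/-- Extended left-degree function used to define boundary types. -/
def extLD (A : Arcs) (l a v : ℕ) : ℕ :=
  if v = 0 then a else if v = l + 1 then 0 else ld A v

/-- Extended right-degree function used to define boundary types. -/
def extRD (A : Arcs) (l b v : ℕ) : ℕ :=
  if v = 0 then 0 else if v = l + 1 then b else rd A v

/-- An `m`-reduced zigzag stack on `[l]` of boundary type `(a,b)`. -/
def BoundaryType (m a b l : ℕ) (A : Arcs) : Prop :=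
  MRed m l A ∧
  (∀ i, i + m ≤ l + 2 → extLD A l a i + extRD A l b (i + m - 1) ≤ 2) ∧
  (∀ i j, i < j → j ≤ l + 1 → 0 < extLD A l a i → 0 < extRD A l b j → i + m ≤ j + 1)

/-- Number of boundary-type-`(a,b)` structures on `[n]`. -/
noncomputable def tc (m a b n : ℕ) : ℕ := Nat.card {A : Arcs // BoundaryType m a b n A}

/-- Generating functions `T_i(x)`; types T₁,…,T₆ correspond to `(a,b)` =
(0,0), (1,0), (1,1), (2,0), (2,1), (2,2). -/
noncomputable def Tgf (m a b : ℕ) : PowerSeries ℚ := PowerSeries.mk fun n => (tc m a b n : ℚ)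

/-- Type G : `m`-reduced zigzag stack with `deg(1) ≤ 1`. -/
def TypeG (m n : ℕ) (A : Arcs) : Prop := MRed m n A ∧ deg A 1 ≤ 1

/-- Type H : `m`-reduced zigzag stack with `deg(1) ≤ 1` and `deg(n) ≤ 1`. -/
def TypeH (m n : ℕ) (A : Arcs) : Prop := MRed m n A ∧ deg A 1 ≤ 1 ∧ deg A n ≤ 1

noncomputable def gcnt (m n : ℕ) : ℕ := Nat.card {A : Arcs // TypeG m n A}
noncomputable def hcnt (m n : ℕ) : ℕ := Nat.card {A : Arcs // TypeH m n A}

/-- Generating function `G(x)`. -/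
noncomputable def Ggf (m : ℕ) : PowerSeries ℚ := PowerSeries.mk fun n => (gcnt m n : ℚ)

/-- Generating function `H(x)`. -/
noncomputable def Hgf (m : ℕ) : PowerSeries ℚ := PowerSeries.mk fun n => (hcnt m n : ℚ)

/-- The reduction map θ_m: replace each arc `(i,j)` by `(i, j−m+1)`. -/
def theta (m : ℕ) (A : Arcs) : Arcs := A.image fun p => (p.1, p.2 - m + 1)

/-- Relabel a structure whose arcs lie in `{c+1, …}` down by `c`. -/
def shiftDown (c : ℕ) (A : Arcs) : Arcs := A.image fun p => (p.1 - c, p.2 - c)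

/-- Conditions (1) and (2) of `m`-reducedness restricted to a set `J` of vertices. -/
def CondOn (m : ℕ) (A : Arcs) (J : Finset ℕ) : Prop :=
  (∀ i, i ∈ J → i + m - 1 ∈ J → ld A i + rd A (i + m - 1) ≤ 2) ∧
  (∀ i j, i ∈ J → j ∈ J → i < j → 0 < ld A i → 0 < rd A j → i + m ≤ j + 1)


section Aux

attribute [local instance] Classical.propDecidable

noncomputable def allArcs (n : ℕ) : Finset (ℕ × ℕ) := (Finset.Icc 1 n) ×ˢ (Finset.Icc 1 n)

noncomputable def Zset (n : ℕ) : Finset Arcs :=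
  (allArcs n).powerset.filter (fun A => IsZigzag n A)

noncomputable def Cset (n : ℕ) : Finset Arcs :=
  (allArcs n).powerset.filter (fun A => IsZigzag n A ∧ ConnectedOn n A)

theorem subset_allArcs {n : ℕ} {A : Arcs} (h : IsDiagram n A) : A ⊆ allArcs n := by
  intro p hp
  obtain ⟨h1, h2, h3⟩ := h p hp
  simp only [allArcs, Finset.mem_product, Finset.mem_Icc]
  omega

theorem mem_Zset {n : ℕ} {A : Arcs} : A ∈ Zset n ↔ IsZigzag n A := by
  simp only [Zset, Finset.mem_filter, Finset.mem_powerset]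
  exact ⟨fun h => h.2, fun h => ⟨subset_allArcs h.1.1, h⟩⟩

theorem mem_Cset {n : ℕ} {A : Arcs} : A ∈ Cset n ↔ IsZigzag n A ∧ ConnectedOn n A := by
  simp only [Cset, Finset.mem_filter, Finset.mem_powerset]
  exact ⟨fun h => h.2, fun h => ⟨subset_allArcs h.1.1.1, h⟩⟩

theorem zigzagCount_eq (n : ℕ) : zigzagCount n = (Zset n).card := by
  calc Nat.card {A : Arcs // IsZigzag n A}
      = Nat.card {A : Arcs // A ∈ Zset n} :=
        Nat.card_congr (Equiv.subtypeEquivRight fun A => mem_Zset.symm)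
    _ = (Zset n).card := Nat.card_eq_finsetCard _

theorem connZigzagCount_eq (n : ℕ) : connZigzagCount n = (Cset n).card := by
  calc Nat.card {A : Arcs // IsZigzag n A ∧ ConnectedOn n A}
      = Nat.card {A : Arcs // A ∈ Cset n} :=
        Nat.card_congr (Equiv.subtypeEquivRight fun A => mem_Cset.symm)
    _ = (Cset n).card := Nat.card_eq_finsetCard _

/-! ### relabelling machinery -/

noncomputable def mapArcs (σ : ℕ → ℕ) (A : Arcs) : Arcs := A.image fun p => (σ p.1, σ p.2)

theorem mem_mapArcs {σ : ℕ → ℕ} {A : Arcs} {q : ℕ × ℕ} :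
    q ∈ mapArcs σ A ↔ ∃ p ∈ A, (σ p.1, σ p.2) = q := by
  simp [mapArcs]

theorem mapArcs_mem {σ : ℕ → ℕ} {A : Arcs} {p : ℕ × ℕ} (hp : p ∈ A) :
    (σ p.1, σ p.2) ∈ mapArcs σ A :=
  Finset.mem_image_of_mem _ hp

theorem mapArcs_comp (σ τ : ℕ → ℕ) (A : Arcs) :
    mapArcs σ (mapArcs τ A) = mapArcs (fun x => σ (τ x)) A := by
  unfold mapArcs
  rw [Finset.image_image]
  rfl

theorem mapArcs_id_of {σ : ℕ → ℕ} {A : Arcs}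
    (h : ∀ p ∈ A, σ p.1 = p.1 ∧ σ p.2 = p.2) : mapArcs σ A = A := by
  apply Finset.ext
  intro q
  rw [mem_mapArcs]
  constructor
  · rintro ⟨p, hp, rfl⟩
    rw [(h p hp).1, (h p hp).2]
    exact hp
  · intro hq
    exact ⟨q, hq, by rw [(h q hq).1, (h q hq).2]⟩

section Transfer

variable {σ : ℕ → ℕ} {S : Set ℕ}
variable (hσ : ∀ a ∈ S, ∀ b ∈ S, a < b → σ a < σ b)

theorem injOn_of_mono (hσ : ∀ a ∈ S, ∀ b ∈ S, a < b → σ a < σ b) :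
    ∀ a ∈ S, ∀ b ∈ S, σ a = σ b → a = b := by
  intro a ha b hb hab
  rcases lt_trichotomy a b with h | h | h
  · exact absurd hab (Nat.ne_of_lt (hσ a ha b hb h))
  · exact h
  · exact absurd hab.symm (Nat.ne_of_lt (hσ b hb a ha h))

theorem lt_of_mono_lt (hσ : ∀ a ∈ S, ∀ b ∈ S, a < b → σ a < σ b) :
    ∀ a ∈ S, ∀ b ∈ S, σ a < σ b → a < b := by
  intro a ha b hb hab
  rcases lt_trichotomy a b with h | h | h
  · exact h
  · subst h; omega
  · exact absurd (hσ b hb a ha h) (by omega)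

variable {A : Arcs} (hA : ∀ p ∈ A, p.1 ∈ S ∧ p.2 ∈ S)

include hσ hA in
theorem ld_mapArcs {v : ℕ} (hv : v ∈ S) : ld (mapArcs σ A) (σ v) = ld A v := by
  unfold ld mapArcs
  rw [Finset.filter_image]
  rw [Finset.card_image_of_injOn]
  · congr 1
    apply Finset.filter_congr
    intro p hp
    simp only
    exact ⟨fun h => injOn_of_mono hσ _ (hA p hp).2 _ hv h, fun h => by rw [h]⟩
  · intro p hp q hq h
    simp only [Finset.coe_filter, Set.mem_setOf_eq] at hp hq
    have h1 := congrArg Prod.fst h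
    have h2 := congrArg Prod.snd h
    simp only at h1 h2
    have e1 := injOn_of_mono hσ _ (hA p hp.1).1 _ (hA q hq.1).1 h1
    have e2 := injOn_of_mono hσ _ (hA p hp.1).2 _ (hA q hq.1).2 h2
    exact Prod.ext e1 e2

include hσ hA in
theorem rd_mapArcs {v : ℕ} (hv : v ∈ S) : rd (mapArcs σ A) (σ v) = rd A v := by
  unfold rd mapArcs
  rw [Finset.filter_image]
  rw [Finset.card_image_of_injOn]
  · congr 1
    apply Finset.filter_congr
    intro p hp
    simp only
    exact ⟨fun h => injOn_of_mono hσ _ (hA p hp).1 _ hv h, fun h => by rw [h]⟩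
  · intro p hp q hq h
    simp only [Finset.coe_filter, Set.mem_setOf_eq] at hp hq
    have h1 := congrArg Prod.fst h
    have h2 := congrArg Prod.snd h
    simp only at h1 h2
    have e1 := injOn_of_mono hσ _ (hA p hp.1).1 _ (hA q hq.1).1 h1
    have e2 := injOn_of_mono hσ _ (hA p hp.1).2 _ (hA q hq.1).2 h2
    exact Prod.ext e1 e2

theorem ld_mapArcs_eq_zero {σ : ℕ → ℕ} {A : Arcs} {w : ℕ} (h : ∀ p ∈ A, σ p.2 ≠ w) :
    ld (mapArcs σ A) w = 0 := by
  unfold ld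
  rw [Finset.card_eq_zero, Finset.filter_eq_empty_iff]
  intro q hq
  obtain ⟨p, hp, rfl⟩ := mem_mapArcs.1 hq
  exact h p hp

theorem rd_mapArcs_eq_zero {σ : ℕ → ℕ} {A : Arcs} {w : ℕ} (h : ∀ p ∈ A, σ p.1 ≠ w) :
    rd (mapArcs σ A) w = 0 := by
  unfold rd
  rw [Finset.card_eq_zero, Finset.filter_eq_empty_iff]
  intro q hq
  obtain ⟨p, hp, rfl⟩ := mem_mapArcs.1 hq
  exact h p hp

include hσ hA in
theorem not_crossing_mapArcs (hnc : ∀ p ∈ A, ∀ q ∈ A, ¬ Crossing p q) :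
    ∀ p ∈ mapArcs σ A, ∀ q ∈ mapArcs σ A, ¬ Crossing p q := by
  intro p' hp' q' hq' hc
  obtain ⟨p, hp, rfl⟩ := mem_mapArcs.1 hp'
  obtain ⟨q, hq, rfl⟩ := mem_mapArcs.1 hq'
  obtain ⟨c1, c2, c3⟩ := hc
  simp only at c1 c2 c3
  exact hnc p hp q hq ⟨lt_of_mono_lt hσ _ (hA p hp).1 _ (hA q hq).1 c1,
    lt_of_mono_lt hσ _ (hA q hq).1 _ (hA p hp).2 c2,
    lt_of_mono_lt hσ _ (hA p hp).2 _ (hA q hq).2 c3⟩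

end Transfer


/-! ### ZigCore -/

def ZigCore (A : Arcs) : Prop :=
  (∀ p ∈ A, ∀ q ∈ A, ¬ Crossing p q) ∧ (∀ v, deg A v ≤ 2) ∧
    ∀ v, ¬ (1 ≤ ld A v ∧ 1 ≤ rd A v)

theorem isZigzag_iff {n : ℕ} {A : Arcs} : IsZigzag n A ↔ IsDiagram n A ∧ ZigCore A := by
  unfold IsZigzag IsStack ZigCore
  tauto

theorem ld_mono {A B : Arcs} (h : B ⊆ A) (v : ℕ) : ld B v ≤ ld A v :=
  Finset.card_le_card (Finset.filter_subset_filter _ h)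

theorem rd_mono {A B : Arcs} (h : B ⊆ A) (v : ℕ) : rd B v ≤ rd A v :=
  Finset.card_le_card (Finset.filter_subset_filter _ h)

theorem ZigCore_subset {A B : Arcs} (h : B ⊆ A) (hz : ZigCore A) : ZigCore B := by
  refine ⟨fun p hp q hq => hz.1 p (h hp) q (h hq), fun v => ?_, fun v hv => ?_⟩
  · exact le_trans (Nat.add_le_add (ld_mono h v) (rd_mono h v)) (hz.2.1 v)
  · exact hz.2.2 v ⟨le_trans hv.1 (ld_mono h v), le_trans hv.2 (rd_mono h v)⟩

theorem ZigCore_mapArcs {σ : ℕ → ℕ} {S : Set ℕ}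
    (hσ : ∀ a ∈ S, ∀ b ∈ S, a < b → σ a < σ b)
    {A : Arcs} (hA : ∀ p ∈ A, p.1 ∈ S ∧ p.2 ∈ S) (hz : ZigCore A) :
    ZigCore (mapArcs σ A) := by
  refine ⟨not_crossing_mapArcs hσ hA hz.1, fun w => ?_, fun w => ?_⟩
  · by_cases hw : ∃ v ∈ S, σ v = w
    · obtain ⟨v, hv, rfl⟩ := hw
      unfold deg
      rw [ld_mapArcs hσ hA hv, rd_mapArcs hσ hA hv]
      exact hz.2.1 v
    · push_neg at hw
      unfold deg
      rw [ld_mapArcs_eq_zero (fun p hp => hw _ (hA p hp).2),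
        rd_mapArcs_eq_zero (fun p hp => hw _ (hA p hp).1)]
      omega
  · by_cases hw : ∃ v ∈ S, σ v = w
    · obtain ⟨v, hv, rfl⟩ := hw
      rw [ld_mapArcs hσ hA hv, rd_mapArcs hσ hA hv]
      exact hz.2.2 v
    · push_neg at hw
      rw [ld_mapArcs_eq_zero (fun p hp => hw _ (hA p hp).2)]
      omega

theorem ld_union_le (s t : Arcs) (v : ℕ) : ld (s ∪ t) v ≤ ld s v + ld t v := by
  unfold ld
  rw [Finset.filter_union]
  exact Finset.card_union_le _ _

theorem rd_union_le (s t : Arcs) (v : ℕ) : rd (s ∪ t) v ≤ rd s v + rd t v := by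
  unfold rd
  rw [Finset.filter_union]
  exact Finset.card_union_le _ _

theorem ld_biUnion_le {k : ℕ} (G : Fin k → Arcs) (v : ℕ) :
    ld (Finset.univ.biUnion G) v ≤ ∑ i, ld (G i) v := by
  unfold ld
  rw [Finset.filter_biUnion]
  exact Finset.card_biUnion_le

theorem rd_biUnion_le {k : ℕ} (G : Fin k → Arcs) (v : ℕ) :
    rd (Finset.univ.biUnion G) v ≤ ∑ i, rd (G i) v := by
  unfold rd
  rw [Finset.filter_biUnion]
  exact Finset.card_biUnion_le

/-! ### paths -/

theorem adj_symm {A : Arcs} {u v : ℕ} (h : adj A u v) : adj A v u := h.symm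

theorem reach_symm {A : Arcs} {a b : ℕ} (h : Relation.ReflTransGen (adj A) a b) :
    Relation.ReflTransGen (adj A) b a := by
  induction h with
  | refl => exact Relation.ReflTransGen.refl
  | tail _ hadj ih => exact (Relation.ReflTransGen.single (adj_symm hadj)).trans ih

theorem inPrimary_of_adj {A : Arcs} {u v : ℕ} (hu : inPrimary A u) (h : adj A u v) :
    inPrimary A v := Relation.ReflTransGen.tail hu h

theorem adj_of_mem {A : Arcs} {p : ℕ × ℕ} (hp : p ∈ A) : adj A p.1 p.2 := Or.inl (by
  simpa using hp)

theorem inPrimary_fst_iff {A : Arcs} {p : ℕ × ℕ} (hp : p ∈ A) :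
    (inPrimary A p.1 ↔ inPrimary A p.2) :=
  ⟨fun h => inPrimary_of_adj h (adj_of_mem hp),
   fun h => inPrimary_of_adj h (adj_symm (adj_of_mem hp))⟩

theorem path_stays_inside {n : ℕ} {A : Arcs} (hs : IsStack n A) {p : ℕ × ℕ} (hp : p ∈ A)
    (hp1 : ¬ inPrimary A p.1) {w z : ℕ} (hw : inPrimary A w)
    (hpath : Relation.ReflTransGen (adj A) w z) (hwin : p.1 < w ∧ w < p.2) :
    p.1 < z ∧ z < p.2 := by
  induction hpath with
  | refl => exact hwin
  | @tail u z huw hadj ih =>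
    have hin : p.1 < u ∧ u < p.2 := ih
    have hu : inPrimary A u := Relation.ReflTransGen.trans hw huw
    have hz' : inPrimary A z := inPrimary_of_adj hu hadj
    have hd := hs.1
    by_contra hcon
    rcases hadj with hq | hq
    · have h1 := hd _ hq
      rcases lt_trichotomy z p.2 with h | h | h
      · exact hcon ⟨by omega, h⟩
      · apply hp1
        rw [inPrimary_fst_iff hp, ← h]
        exact hz'
      · exact hs.2 p hp (u, z) hq ⟨hin.1, hin.2, h⟩
    · have h1 := hd _ hq
      rcases lt_trichotomy p.1 z with h | h | h
      · exact hcon ⟨h, by omega⟩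
      · apply hp1
        rw [h]
        exact hz'
      · exact hs.2 (z, u) hq p hp ⟨h, hin.1, hin.2⟩

theorem no_primary_inside {n : ℕ} {A : Arcs} (hs : IsStack n A) {p : ℕ × ℕ} (hp : p ∈ A)
    (hp1 : ¬ inPrimary A p.1) {w : ℕ} (hw : inPrimary A w) : ¬ (p.1 < w ∧ w < p.2) := by
  intro hwin
  have h2 := path_stays_inside hs hp hp1 hw (reach_symm hw) hwin
  have h1 := (hs.1 p hp).1
  omega

/-! ### positions -/

noncomputable def dE (k : ℕ) (d : Fin k → ℕ) : ℕ → ℕ := fun i => if h : i < k then d ⟨i, h⟩ else 0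

noncomputable def posF (k : ℕ) (d : Fin k → ℕ) (j : ℕ) : ℕ :=
  j + ∑ i ∈ Finset.range (j - 1), dE k d i

theorem posF_one (k : ℕ) (d : Fin k → ℕ) : posF k d 1 = 1 := by simp [posF]

theorem posF_strictMono (k : ℕ) (d : Fin k → ℕ) : StrictMono (posF k d) := by
  apply strictMono_nat_of_lt_succ
  intro j
  unfold posF
  have hs : ∑ i ∈ Finset.range (j - 1), dE k d i ≤ ∑ i ∈ Finset.range (j + 1 - 1), dE k d i :=
    Finset.sum_le_sum_of_subset (Finset.range_subset_range.2 (by omega))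
  omega

theorem posF_succ (k : ℕ) (d : Fin k → ℕ) {j : ℕ} (hj : 1 ≤ j) :
    posF k d (j + 1) = posF k d j + dE k d (j - 1) + 1 := by
  unfold posF
  have h1 : j + 1 - 1 = (j - 1) + 1 := by omega
  rw [h1, Finset.sum_range_succ]
  omega

theorem posF_fin (k : ℕ) (d : Fin k → ℕ) (i : Fin k) :
    posF k d (i.1 + 1) + d i + 1 = posF k d (i.1 + 2) := by
  have h := posF_succ k d (j := i.1 + 1) (by omega)
  have hd : dE k d (i.1 + 1 - 1) = d i := by simp [dE, i.isLt]
  rw [show i.1 + 2 = i.1 + 1 + 1 by omega, h, hd]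

theorem posF_top (k : ℕ) (d : Fin k → ℕ) : posF k d (k + 1) = k + 1 + ∑ i, d i := by
  unfold posF
  have h1 : k + 1 - 1 = k := by omega
  rw [h1, ← Fin.sum_univ_eq_sum_range (fun i => dE k d i) k]
  congr 1
  apply Finset.sum_congr rfl
  intro i _
  simp [dE, i.isLt]

/-! ### the composition map -/

noncomputable def psi (k : ℕ) (B : Arcs) (d : Fin k → ℕ) (f : Fin k → Arcs) : Arcs :=
  mapArcs (posF k d) B ∪
    Finset.univ.biUnion fun i : Fin k => mapArcs (· + posF k d (i.1 + 1)) (f i)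

section Psi

variable {n k : ℕ} {B : Arcs} {d : Fin k → ℕ} {f : Fin k → Arcs}

theorem mem_E_elim (hB : IsZigzag k B) {p : ℕ × ℕ} (hp : p ∈ mapArcs (posF k d) B) :
    ∃ a b, 1 ≤ a ∧ a < b ∧ b ≤ k ∧ p = (posF k d a, posF k d b) := by
  obtain ⟨q, hq, rfl⟩ := mem_mapArcs.1 hp
  obtain ⟨h1, h2, h3⟩ := hB.1.1 q hq
  exact ⟨q.1, q.2, h1, h2, h3, rfl⟩

theorem mem_G_elim (hf : ∀ i, IsZigzag (d i) (f i)) {i : Fin k} {p : ℕ × ℕ}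
    (hp : p ∈ mapArcs (· + posF k d (i.1 + 1)) (f i)) :
    posF k d (i.1 + 1) < p.1 ∧ p.1 < p.2 ∧ p.2 ≤ posF k d (i.1 + 1) + d i := by
  obtain ⟨q, hq, rfl⟩ := mem_mapArcs.1 hp
  obtain ⟨h1, h2, h3⟩ := (hf i).1.1 q hq
  simp only
  omega

theorem pos_not_in_span {a : ℕ} (ha1 : 1 ≤ a) (hak : a ≤ k) (i : Fin k) :
    ¬ (posF k d (i.1 + 1) < posF k d a ∧ posF k d a ≤ posF k d (i.1 + 1) + d i) := by
  rintro ⟨h1, h2⟩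
  have hm := posF_strictMono k d
  have hfin := posF_fin k d i
  rcases le_or_gt a (i.1 + 1) with h | h
  · have := hm.le_iff_le.2 h
    omega
  · have : posF k d (i.1 + 2) ≤ posF k d a := hm.le_iff_le.2 (by omega)
    omega

theorem span_disjoint {i j : Fin k} (hij : i.1 < j.1) :
    posF k d (i.1 + 1) + d i < posF k d (j.1 + 1) := by
  have hm := posF_strictMono k d
  have hfin := posF_fin k d i
  have : posF k d (i.1 + 2) ≤ posF k d (j.1 + 1) := hm.le_iff_le.2 (by omega)
  omega

theorem psi_deg_le (hB : IsZigzag k B) (hf : ∀ i, IsZigzag (d i) (f i)) (v : ℕ) :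
    ∃ l r : ℕ, ld (psi k B d f) v ≤ l ∧ rd (psi k B d f) v ≤ r ∧ l + r ≤ 2 ∧
      ¬ (1 ≤ l ∧ 1 ≤ r) := by
  simp only [psi]
  have hm := posF_strictMono k d
  have hmono : ∀ a ∈ Set.univ, ∀ b ∈ Set.univ, a < b → posF k d a < posF k d b :=
    fun a _ b _ h => hm h
  have hld := ld_union_le (mapArcs (posF k d) B)
    (Finset.univ.biUnion fun i : Fin k => mapArcs (· + posF k d (i.1 + 1)) (f i)) v
  have hrd := rd_union_le (mapArcs (posF k d) B)
    (Finset.univ.biUnion fun i : Fin k => mapArcs (· + posF k d (i.1 + 1)) (f i)) v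
  have hldb : ld (Finset.univ.biUnion fun i : Fin k => mapArcs (· + posF k d (i.1 + 1)) (f i)) v
      ≤ ∑ i : Fin k, ld (mapArcs (· + posF k d (i.1 + 1)) (f i)) v := ld_biUnion_le _ v
  have hrdb : rd (Finset.univ.biUnion fun i : Fin k => mapArcs (· + posF k d (i.1 + 1)) (f i)) v
      ≤ ∑ i : Fin k, rd (mapArcs (· + posF k d (i.1 + 1)) (f i)) v := rd_biUnion_le _ v
  by_cases h1 : ∃ a, 1 ≤ a ∧ a ≤ k ∧ posF k d a = v
  · obtain ⟨a, ha1, ha2, rfl⟩ := h1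
    have hEld : ld (mapArcs (posF k d) B) (posF k d a) = ld B a :=
      ld_mapArcs hmono (fun p _ => ⟨trivial, trivial⟩) trivial
    have hErd : rd (mapArcs (posF k d) B) (posF k d a) = rd B a :=
      rd_mapArcs hmono (fun p _ => ⟨trivial, trivial⟩) trivial
    have hGl : ∀ i : Fin k, ld (mapArcs (· + posF k d (i.1 + 1)) (f i)) (posF k d a) = 0 := by
      intro i
      apply ld_mapArcs_eq_zero
      intro p hp heq
      obtain ⟨e1, e2, e3⟩ := (hf i).1.1 p hp
      exact pos_not_in_span (d := d) ha1 ha2 i (by omega)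
    have hGr : ∀ i : Fin k, rd (mapArcs (· + posF k d (i.1 + 1)) (f i)) (posF k d a) = 0 := by
      intro i
      apply rd_mapArcs_eq_zero
      intro p hp heq
      obtain ⟨e1, e2, e3⟩ := (hf i).1.1 p hp
      exact pos_not_in_span (d := d) ha1 ha2 i (by omega)
    refine ⟨ld B a, rd B a, ?_, ?_, hB.2.1 a, hB.2.2 a⟩
    · have : ∑ i : Fin k, ld (mapArcs (· + posF k d (i.1 + 1)) (f i)) (posF k d a) = 0 :=
        Finset.sum_eq_zero fun i _ => hGl i
      omega
    · have : ∑ i : Fin k, rd (mapArcs (· + posF k d (i.1 + 1)) (f i)) (posF k d a) = 0 :=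
        Finset.sum_eq_zero fun i _ => hGr i
      omega
  · by_cases h2 : ∃ i : Fin k, posF k d (i.1 + 1) < v ∧ v ≤ posF k d (i.1 + 1) + d i
    · obtain ⟨i, hi1, hi2⟩ := h2
      have hveq : (v - posF k d (i.1 + 1)) + posF k d (i.1 + 1) = v := by omega
      have hGli : ld (mapArcs (· + posF k d (i.1 + 1)) (f i)) v = ld (f i) (v - posF k d (i.1 + 1)) := by
        conv_lhs => rw [← hveq]
        exact ld_mapArcs (S := Set.univ) (fun a _ b _ h => by omega)
          (fun p _ => ⟨trivial, trivial⟩) trivial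
      have hGri : rd (mapArcs (· + posF k d (i.1 + 1)) (f i)) v = rd (f i) (v - posF k d (i.1 + 1)) := by
        conv_lhs => rw [← hveq]
        exact rd_mapArcs (S := Set.univ) (fun a _ b _ h => by omega)
          (fun p _ => ⟨trivial, trivial⟩) trivial
      have hspanj : ∀ j : Fin k, j ≠ i → ∀ x, 1 ≤ x → x ≤ d j → x + posF k d (j.1 + 1) ≠ v := by
        intro j hji x hx1 hx2 heq
        rcases Fin.lt_or_lt_of_ne hji with h | h
        · have := span_disjoint (d := d) h
          omega
        · have := span_disjoint (d := d) h
          omega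
      have hGl : ∀ j : Fin k, j ≠ i → ld (mapArcs (· + posF k d (j.1 + 1)) (f j)) v = 0 := by
        intro j hji
        apply ld_mapArcs_eq_zero
        intro p hp
        obtain ⟨e1, e2, e3⟩ := (hf j).1.1 p hp
        exact hspanj j hji p.2 (by omega) e3
      have hGr : ∀ j : Fin k, j ≠ i → rd (mapArcs (· + posF k d (j.1 + 1)) (f j)) v = 0 := by
        intro j hji
        apply rd_mapArcs_eq_zero
        intro p hp
        obtain ⟨e1, e2, e3⟩ := (hf j).1.1 p hp
        exact hspanj j hji p.1 e1 (by omega)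
      have hEl : ld (mapArcs (posF k d) B) v = 0 := by
        apply ld_mapArcs_eq_zero
        intro p hp heq
        obtain ⟨e1, e2, e3⟩ := hB.1.1 p hp
        exact h1 ⟨p.2, by omega, e3, heq⟩
      have hEr : rd (mapArcs (posF k d) B) v = 0 := by
        apply rd_mapArcs_eq_zero
        intro p hp heq
        obtain ⟨e1, e2, e3⟩ := hB.1.1 p hp
        exact h1 ⟨p.1, e1, by omega, heq⟩
      refine ⟨ld (f i) (v - posF k d (i.1 + 1)), rd (f i) (v - posF k d (i.1 + 1)), ?_, ?_,
        (hf i).2.1 _, (hf i).2.2 _⟩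
      · have hsum1 : ∑ j : Fin k, ld (mapArcs (· + posF k d (j.1 + 1)) (f j)) v
            = ld (f i) (v - posF k d (i.1 + 1)) := by
          rw [Fintype.sum_eq_single i (fun j hji => hGl j hji)]
          exact hGli
        omega
      · have hsum1 : ∑ j : Fin k, rd (mapArcs (· + posF k d (j.1 + 1)) (f j)) v
            = rd (f i) (v - posF k d (i.1 + 1)) := by
          rw [Fintype.sum_eq_single i (fun j hji => hGr j hji)]
          exact hGri
        omega
    · push_neg at h2
      have hGl : ∀ j : Fin k, ld (mapArcs (· + posF k d (j.1 + 1)) (f j)) v = 0 := by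
        intro j
        apply ld_mapArcs_eq_zero
        intro p hp heq
        obtain ⟨e1, e2, e3⟩ := (hf j).1.1 p hp
        by_cases hj : posF k d (j.1 + 1) < v
        · have := h2 j hj
          omega
        · omega
      have hGr : ∀ j : Fin k, rd (mapArcs (· + posF k d (j.1 + 1)) (f j)) v = 0 := by
        intro j
        apply rd_mapArcs_eq_zero
        intro p hp heq
        obtain ⟨e1, e2, e3⟩ := (hf j).1.1 p hp
        by_cases hj : posF k d (j.1 + 1) < v
        · have := h2 j hj
          omega
        · omega
      have hEl : ld (mapArcs (posF k d) B) v = 0 := by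
        apply ld_mapArcs_eq_zero
        intro p hp heq
        obtain ⟨e1, e2, e3⟩ := hB.1.1 p hp
        exact h1 ⟨p.2, by omega, e3, heq⟩
      have hEr : rd (mapArcs (posF k d) B) v = 0 := by
        apply rd_mapArcs_eq_zero
        intro p hp heq
        obtain ⟨e1, e2, e3⟩ := hB.1.1 p hp
        exact h1 ⟨p.1, e1, by omega, heq⟩
      refine ⟨0, 0, ?_, ?_, by omega, by omega⟩
      · have : ∑ j : Fin k, ld (mapArcs (· + posF k d (j.1 + 1)) (f j)) v = 0 :=
          Finset.sum_eq_zero fun j _ => hGl j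
        omega
      · have : ∑ j : Fin k, rd (mapArcs (· + posF k d (j.1 + 1)) (f j)) v = 0 :=
          Finset.sum_eq_zero fun j _ => hGr j
        omega

theorem psi_mem_Zset (hk1 : 1 ≤ k) (hsum : k + ∑ i, d i = n)
    (hB : IsZigzag k B) (hf : ∀ i, IsZigzag (d i) (f i)) : psi k B d f ∈ Zset n := by
  rw [mem_Zset, isZigzag_iff]
  have hm := posF_strictMono k d
  have htop : posF k d (k + 1) = n + 1 := by rw [posF_top]; omega
  have hone := posF_one k d
  constructor
  · intro p hp
    rcases Finset.mem_union.1 hp with hE | hG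
    · obtain ⟨a, b, h1, h2, h3, rfl⟩ := mem_E_elim hB hE
      refine ⟨?_, hm h2, ?_⟩
      · have := hm.le_iff_le.2 h1
        omega
      · have : posF k d b < posF k d (k + 1) := hm (by omega)
        omega
    · obtain ⟨i, -, hp'⟩ := Finset.mem_biUnion.1 hG
      obtain ⟨hc1, hc2, hc3⟩ := mem_G_elim hf hp'
      have h4 := posF_fin k d i
      have h5 : posF k d (i.1 + 2) ≤ posF k d (k + 1) := hm.le_iff_le.2 (by omega)
      have h6 : 1 ≤ posF k d (i.1 + 1) := by
        have := hm.le_iff_le.2 (show 1 ≤ i.1 + 1 by omega)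
        omega
      exact ⟨by omega, hc2, by omega⟩
  refine ⟨?_, ?_, ?_⟩
  · -- noncrossing
    intro p hp q hq
    have hmono : ∀ a ∈ Set.univ, ∀ b ∈ Set.univ, a < b → posF k d a < posF k d b :=
      fun a _ b _ h => hm h
    rcases Finset.mem_union.1 hp with hpE | hpG <;> rcases Finset.mem_union.1 hq with hqE | hqG
    · exact not_crossing_mapArcs hmono (fun p _ => ⟨trivial, trivial⟩) hB.1.2 p hpE q hqE
    · obtain ⟨a, b, h1, h2, h3, rfl⟩ := mem_E_elim hB hpE
      obtain ⟨i, -, hq'⟩ := Finset.mem_biUnion.1 hqG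
      obtain ⟨hc1, hc2, hc3⟩ := mem_G_elim hf hq'
      rintro ⟨x1, x2, x3⟩
      simp only at x1 x2 x3
      exact pos_not_in_span (d := d) (by omega) h3 i (by omega)
    · obtain ⟨a, b, h1, h2, h3, rfl⟩ := mem_E_elim hB hqE
      obtain ⟨i, -, hp'⟩ := Finset.mem_biUnion.1 hpG
      obtain ⟨hc1, hc2, hc3⟩ := mem_G_elim hf hp'
      rintro ⟨x1, x2, x3⟩
      simp only at x1 x2 x3
      exact pos_not_in_span (d := d) h1 (le_trans (le_of_lt h2) h3) i (by omega)
    · obtain ⟨i, -, hp'⟩ := Finset.mem_biUnion.1 hpG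
      obtain ⟨j, -, hq'⟩ := Finset.mem_biUnion.1 hqG
      by_cases hij : i = j
      · subst hij
        exact not_crossing_mapArcs (S := Set.univ) (fun a _ b _ h => by omega)
          (fun p _ => ⟨trivial, trivial⟩) (hf i).1.2 p hp' q hq'
      · obtain ⟨hc1, hc2, hc3⟩ := mem_G_elim hf hp'
        obtain ⟨e1, e2, e3⟩ := mem_G_elim hf hq'
        rintro ⟨x1, x2, x3⟩
        rcases Fin.lt_or_lt_of_ne hij with h | h
        · have := span_disjoint (d := d) h
          omega
        · have := span_disjoint (d := d) h
          omega
  · intro v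
    obtain ⟨l, r, a1, a2, a3, a4⟩ := psi_deg_le hB hf v
    unfold deg
    omega
  · intro v
    obtain ⟨l, r, a1, a2, a3, a4⟩ := psi_deg_le hB hf v
    intro hv
    exact a4 ⟨by omega, by omega⟩

theorem up_path (hx : Relation.ReflTransGen (adj B) x y) :
    Relation.ReflTransGen (adj (psi k B d f)) (posF k d x) (posF k d y) := by
  induction hx with
  | refl => exact Relation.ReflTransGen.refl
  | tail _ hadj ih =>
    refine Relation.ReflTransGen.tail ih ?_
    rcases hadj with hq | hq
    · exact Or.inl (Finset.mem_union_left _ (mapArcs_mem (σ := posF k d) hq))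
    · exact Or.inr (Finset.mem_union_left _ (mapArcs_mem (σ := posF k d) hq))

theorem psi_reach (hk1 : 1 ≤ k) (hB : IsZigzag k B) (hf : ∀ i, IsZigzag (d i) (f i))
    {x : ℕ} (hx : Relation.ReflTransGen (adj (psi k B d f)) 1 x) :
    ∃ a, 1 ≤ a ∧ a ≤ k ∧ posF k d a = x := by
  induction hx with
  | refl => exact ⟨1, le_rfl, hk1, posF_one k d⟩
  | @tail u z _ hadj ih =>
    obtain ⟨a, ha1, ha2, rfl⟩ := ih
    have key : ∀ w, (posF k d a, w) ∈ psi k B d f ∨ (w, posF k d a) ∈ psi k B d f →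
        ∃ b, 1 ≤ b ∧ b ≤ k ∧ posF k d b = w := by
      intro w hw
      rcases hw with hq | hq <;> rcases Finset.mem_union.1 hq with hE | hG
      · obtain ⟨a', b', g1, g2, g3, geq⟩ := mem_E_elim hB hE
        have e2 : w = posF k d b' := congrArg Prod.snd geq
        exact ⟨b', by omega, g3, e2.symm⟩
      · obtain ⟨i, -, hp'⟩ := Finset.mem_biUnion.1 hG
        obtain ⟨g1, g2, g3⟩ := mem_G_elim hf hp'
        exact absurd ⟨g1, by omega⟩ (pos_not_in_span (d := d) ha1 ha2 i)
      · obtain ⟨a', b', g1, g2, g3, geq⟩ := mem_E_elim hB hE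
        have e2 : w = posF k d a' := congrArg Prod.fst geq
        exact ⟨a', g1, by omega, e2.symm⟩
      · obtain ⟨i, -, hp'⟩ := Finset.mem_biUnion.1 hG
        obtain ⟨g1, g2, g3⟩ := mem_G_elim hf hp'
        exact absurd ⟨by omega, g3⟩ (pos_not_in_span (d := d) ha1 ha2 i)
    exact key z hadj

theorem psi_primary (hk1 : 1 ≤ k) (hsum : k + ∑ i, d i = n) (hB : IsZigzag k B)
    (hBc : ConnectedOn k B) (hf : ∀ i, IsZigzag (d i) (f i)) :
    (Finset.Icc 1 n).filter (inPrimary (psi k B d f)) = (Finset.Icc 1 k).image (posF k d) := by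
  have hm := posF_strictMono k d
  have htop : posF k d (k + 1) = n + 1 := by rw [posF_top]; omega
  have hone := posF_one k d
  ext v
  simp only [Finset.mem_filter, Finset.mem_Icc, Finset.mem_image]
  constructor
  · rintro ⟨-, hprim⟩
    obtain ⟨a, ha1, ha2, rfl⟩ := psi_reach hk1 hB hf hprim
    exact ⟨a, ⟨ha1, ha2⟩, rfl⟩
  · rintro ⟨a, ⟨ha1, ha2⟩, rfl⟩
    refine ⟨⟨?_, ?_⟩, ?_⟩
    · have := hm.le_iff_le.2 ha1
      omega
    · have : posF k d a < posF k d (k + 1) := hm (by omega)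
      omega
    · have := up_path (B := B) (d := d) (f := f) (hBc 1 a le_rfl hk1 ha1 ha2)
      rwa [hone] at this

theorem psi_epart (hB : IsZigzag k B) (hf : ∀ i, IsZigzag (d i) (f i)) :
    (psi k B d f).filter (fun p => p.1 ∈ (Finset.Icc 1 k).image (posF k d))
      = mapArcs (posF k d) B := by
  ext p
  simp only [Finset.mem_filter]
  constructor
  · rintro ⟨hmem, hin⟩
    rcases Finset.mem_union.1 hmem with hE | hG
    · exact hE
    · obtain ⟨i, -, hp'⟩ := Finset.mem_biUnion.1 hG
      obtain ⟨g1, g2, g3⟩ := mem_G_elim hf hp'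
      obtain ⟨a, ha, heq⟩ := Finset.mem_image.1 hin
      simp only [Finset.mem_Icc] at ha
      exact absurd ⟨by omega, by omega⟩ (pos_not_in_span (d := d) ha.1 ha.2 i)
  · intro hp
    refine ⟨Finset.mem_union_left _ hp, ?_⟩
    obtain ⟨a, b, h1, h2, h3, rfl⟩ := mem_E_elim hB hp
    exact Finset.mem_image.2 ⟨a, Finset.mem_Icc.2 ⟨h1, by omega⟩, rfl⟩

theorem psi_gpart (hB : IsZigzag k B) (hf : ∀ i, IsZigzag (d i) (f i)) (i : Fin k) :
    (psi k B d f).filter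
        (fun p => posF k d (i.1 + 1) < p.1 ∧ p.1 ≤ posF k d (i.1 + 1) + d i)
      = mapArcs (· + posF k d (i.1 + 1)) (f i) := by
  ext p
  simp only [Finset.mem_filter]
  constructor
  · rintro ⟨hmem, hin1, hin2⟩
    rcases Finset.mem_union.1 hmem with hE | hG
    · obtain ⟨a, b, h1, h2, h3, rfl⟩ := mem_E_elim hB hE
      simp only at hin1 hin2
      exact absurd ⟨hin1, hin2⟩ (pos_not_in_span (d := d) h1 (by omega) i)
    · obtain ⟨j, -, hp'⟩ := Finset.mem_biUnion.1 hG
      by_cases hij : j = i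
      · subst hij
        exact hp'
      · obtain ⟨g1, g2, g3⟩ := mem_G_elim hf hp'
        rcases Fin.lt_or_lt_of_ne hij with h | h
        · have := span_disjoint (d := d) h
          omega
        · have := span_disjoint (d := d) h
          omega
  · intro hp
    obtain ⟨g1, g2, g3⟩ := mem_G_elim hf hp
    exact ⟨Finset.mem_union_right _ (Finset.mem_biUnion.2 ⟨i, Finset.mem_univ i, hp⟩),
      g1, by omega⟩

end Psi

/-! ### decomposition -/

theorem psi_surj {n : ℕ} (hn : 1 ≤ n) {A : Arcs} (hAz : A ∈ Zset n) :
    ∃ k, ∃ B : Arcs, ∃ d : Fin k → ℕ, ∃ f : Fin k → Arcs,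
      1 ≤ k ∧ k ≤ n ∧ B ∈ Cset k ∧ (∑ i, d i = n - k) ∧ (∀ i, f i ∈ Zset (d i)) ∧
        psi k B d f = A := by
  rw [mem_Zset] at hAz
  have hD : IsDiagram n A := hAz.1.1
  have hS : IsStack n A := hAz.1
  set P : Finset ℕ := (Finset.Icc 1 n).filter (inPrimary A) with hP
  have hPmem : ∀ {v}, v ∈ P ↔ (1 ≤ v ∧ v ≤ n ∧ inPrimary A v) := by
    intro v
    simp [hP, Finset.mem_filter, Finset.mem_Icc, and_assoc]
  have h1P : (1 : ℕ) ∈ P := hPmem.2 ⟨le_rfl, hn, Relation.ReflTransGen.refl⟩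
  set k := P.card with hk
  have hk1 : 1 ≤ k := Finset.card_pos.2 ⟨1, h1P⟩
  have hkn : k ≤ n := by
    have h := Finset.card_le_card (Finset.filter_subset (inPrimary A) (Finset.Icc 1 n))
    simpa [Nat.card_Icc] using h
  set e : Fin k → ℕ := fun i => P.orderEmbOfFin rfl i with he
  have heMem : ∀ i, e i ∈ P := fun i => P.orderEmbOfFin_mem rfl i
  have heMono : StrictMono e := (P.orderEmbOfFin rfl).strictMono
  have heSurj : ∀ x ∈ P, ∃ i, e i = x := by
    intro x hx
    have hx' : x ∈ Set.range (P.orderEmbOfFin rfl) := by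
      rw [Finset.range_orderEmbOfFin]
      exact hx
    obtain ⟨i, hi⟩ := hx'
    exact ⟨i, hi⟩
  have he0 : e ⟨0, hk1⟩ = 1 := by
    obtain ⟨j, hj⟩ := heSurj 1 h1P
    have h1 : e ⟨0, hk1⟩ ≤ e j := heMono.le_iff_le.2 (by rw [Fin.le_def]; exact Nat.zero_le _)
    have h2 : 1 ≤ e ⟨0, hk1⟩ := (hPmem.1 (heMem _)).1
    omega
  set d : Fin k → ℕ :=
    fun i => if h : i.1 + 1 < k then e ⟨i.1 + 1, h⟩ - e i - 1 else n - e i with hd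
  have hdpos : ∀ (i : Fin k) (h : i.1 + 1 < k), d i = e ⟨i.1 + 1, h⟩ - e i - 1 := by
    intro i h
    simp only [hd]
    rw [dif_pos h]
  have hdneg : ∀ (i : Fin k), ¬ (i.1 + 1 < k) → d i = n - e i := by
    intro i h
    simp only [hd]
    rw [dif_neg h]
  have hpose : ∀ j, (hj : j < k) → posF k d (j + 1) = e ⟨j, hj⟩ := by
    intro j
    induction j with
    | zero =>
      intro hj
      rw [posF_one, ← he0]
    | succ m ih =>
      intro hj
      have hm : m < k := by omega
      have hrec := posF_succ k d (j := m + 1) (by omega)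
      simp only [Nat.add_sub_cancel] at hrec
      have hdE : dE k d m = d ⟨m, hm⟩ := by simp [dE, hm]
      have hdval := hdpos ⟨m, hm⟩ hj
      have hlt : e ⟨m, hm⟩ < e ⟨m + 1, hj⟩ := heMono (Fin.mk_lt_mk.2 (by omega))
      rw [hrec, ih hm, hdE, hdval]
      simp only
      omega
  have hlastlt : k - 1 < k := by omega
  have hentop : ∀ i, e i ≤ n := fun i => (hPmem.1 (heMem i)).2.1
  have htop : posF k d (k + 1) = n + 1 := by
    have hrec := posF_succ k d (j := k) (by omega)
    have hdE : dE k d (k - 1) = d ⟨k - 1, hlastlt⟩ := by simp [dE, hlastlt]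
    have hdval : d ⟨k - 1, hlastlt⟩ = n - e ⟨k - 1, hlastlt⟩ := hdneg _ (by simp; omega)
    have hpk : posF k d k = e ⟨k - 1, hlastlt⟩ := by
      have h := hpose (k - 1) hlastlt
      rwa [show k - 1 + 1 = k by omega] at h
    rw [hrec, hpk, hdE, hdval]
    have := hentop ⟨k - 1, hlastlt⟩
    omega
  have hsum : ∑ i, d i = n - k := by
    have h := posF_top k d
    omega
  set rk : ℕ → ℕ := fun u => (P.filter (· ≤ u)).card with hrk
  have hrkMono : ∀ a ∈ (↑P : Set ℕ), ∀ b ∈ (↑P : Set ℕ), a < b → rk a < rk b := by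
    intro a ha b hb hab
    rw [Finset.mem_coe] at ha hb
    apply Finset.card_lt_card
    rw [Finset.ssubset_iff_of_subset (Finset.monotone_filter_right P (fun x _ hx => le_trans hx (le_of_lt hab)))]
    exact ⟨b, Finset.mem_filter.2 ⟨hb, le_rfl⟩, fun hcon => by
      have := (Finset.mem_filter.1 hcon).2
      omega⟩
  have hrke : ∀ i : Fin k, rk (e i) = i.1 + 1 := by
    intro i
    have hset : P.filter (· ≤ e i) = (Finset.univ.filter (fun j : Fin k => j ≤ i)).image e := by
      ext x
      simp only [Finset.mem_filter, Finset.mem_image, Finset.mem_univ, true_and]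
      constructor
      · rintro ⟨hx, hle⟩
        obtain ⟨j, rfl⟩ := heSurj x hx
        exact ⟨j, heMono.le_iff_le.1 hle, rfl⟩
      · rintro ⟨j, hj, rfl⟩
        exact ⟨heMem j, heMono.le_iff_le.2 hj⟩
    have hcard : (Finset.univ.filter (fun j : Fin k => j ≤ i)).card = i.1 + 1 := by
      rw [show i.1 + 1 = (Finset.range (i.1 + 1)).card by simp]
      apply Finset.card_bij (fun (j : Fin k) _ => j.1)
      · intro a ha
        simp only [Finset.mem_filter, Finset.mem_univ, true_and, Fin.le_def] at ha
        simp only [Finset.mem_range]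
        omega
      · intro a _ b _ h
        exact Fin.ext h
      · intro b hb
        simp only [Finset.mem_range] at hb
        refine ⟨⟨b, by omega⟩, ?_, rfl⟩
        simp only [Finset.mem_filter, Finset.mem_univ, true_and, Fin.le_def]
        omega
    simp only [hrk]
    rw [hset, Finset.card_image_of_injective _ heMono.injective, hcard]
  set Ppart : Arcs := A.filter (fun p => p.1 ∈ P) with hPp
  have hPboth : ∀ p ∈ A, (p.1 ∈ P ↔ p.2 ∈ P) := by
    intro p hp
    obtain ⟨g1, g2, g3⟩ := hD p hp
    constructor
    · intro h
      exact hPmem.2 ⟨by omega, g3, (inPrimary_fst_iff hp).1 (hPmem.1 h).2.2⟩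
    · intro h
      exact hPmem.2 ⟨g1, by omega, (inPrimary_fst_iff hp).2 (hPmem.1 h).2.2⟩
  have hPpart_mem : ∀ p ∈ Ppart, p.1 ∈ (↑P : Set ℕ) ∧ p.2 ∈ (↑P : Set ℕ) := by
    intro p hp
    have h1 := (Finset.mem_filter.1 hp).2
    have h2 := (hPboth p (Finset.mem_filter.1 hp).1).1 h1
    exact ⟨Finset.mem_coe.2 h1, Finset.mem_coe.2 h2⟩
  set Bb : Arcs := mapArcs rk Ppart with hBb
  have hBdiag : IsDiagram k Bb := by
    intro q hq
    obtain ⟨p, hp, rfl⟩ := mem_mapArcs.1 hq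
    have hpA := (Finset.mem_filter.1 hp).1
    have h1 := (Finset.mem_filter.1 hp).2
    have h2 := (hPboth p hpA).1 h1
    have hlt : rk p.1 < rk p.2 :=
      hrkMono _ (Finset.mem_coe.2 h1) _ (Finset.mem_coe.2 h2) (hD p hpA).2.1
    have hub : rk p.2 ≤ k := Finset.card_le_card (Finset.filter_subset _ _)
    have hlb : 1 ≤ rk p.1 := Finset.card_pos.2 ⟨p.1, Finset.mem_filter.2 ⟨h1, le_rfl⟩⟩
    exact ⟨hlb, hlt, hub⟩
  have hBzig : IsZigzag k Bb :=
    isZigzag_iff.2 ⟨hBdiag, ZigCore_mapArcs hrkMono hPpart_mem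
      (ZigCore_subset (Finset.filter_subset _ _) (isZigzag_iff.1 hAz).2)⟩
  have hDown : ∀ x y, Relation.ReflTransGen (adj A) x y → x ∈ P →
      y ∈ P ∧ Relation.ReflTransGen (adj Bb) (rk x) (rk y) := by
    intro x y hxy hx
    induction hxy with
    | refl => exact ⟨hx, Relation.ReflTransGen.refl⟩
    | @tail u z huz hadj ih =>
      obtain ⟨hu, hpath⟩ := ih
      have hzP : z ∈ P := by
        rcases hadj with hq | hq
        · exact (hPboth _ hq).1 hu
        · exact (hPboth _ hq).2 hu
      refine ⟨hzP, hpath.tail ?_⟩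
      rcases hadj with hq | hq
      · exact Or.inl (mapArcs_mem (σ := rk) (Finset.mem_filter.2 ⟨hq, hu⟩))
      · exact Or.inr (mapArcs_mem (σ := rk) (Finset.mem_filter.2 ⟨hq, hzP⟩))
  have hBconn : ConnectedOn k Bb := by
    intro u v hu1 huk hv1 hvk
    have hiu : u - 1 < k := by omega
    have hiv : v - 1 < k := by omega
    have hxu := heMem ⟨u - 1, hiu⟩
    have hxv := heMem ⟨v - 1, hiv⟩
    have hpathA : Relation.ReflTransGen (adj A) (e ⟨u - 1, hiu⟩) (e ⟨v - 1, hiv⟩) :=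
      (reach_symm (hPmem.1 hxu).2.2).trans (hPmem.1 hxv).2.2
    have h := (hDown _ _ hpathA hxu).2
    rw [hrke, hrke] at h
    simp only at h
    rwa [show u - 1 + 1 = u by omega, show v - 1 + 1 = v by omega] at h
  have hGpartP : ∀ (i : Fin k), ∀ p ∈ A, e i < p.1 → p.1 ≤ e i + d i →
      (p.1 ∉ P ∧ p.2 ≤ e i + d i) := by
    intro i p hp hlt hle
    obtain ⟨g1, g2, g3⟩ := hD p hp
    have hnotP : p.1 ∉ P := by
      intro hmem
      obtain ⟨j, hj⟩ := heSurj _ hmem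
      have hij : i < j := heMono.lt_iff_lt.1 (by omega)
      by_cases hik : i.1 + 1 < k
      · have hdi := hdpos i hik
        have h1 : e ⟨i.1 + 1, hik⟩ ≤ e j := heMono.le_iff_le.2 (by
          rw [Fin.le_def]
          simp only
          rw [Fin.lt_def] at hij
          omega)
        have hlt2 : e i < e ⟨i.1 + 1, hik⟩ := heMono (by rw [Fin.lt_def]; simp)
        omega
      · have := j.isLt
        rw [Fin.lt_def] at hij
        omega
    refine ⟨hnotP, ?_⟩
    by_cases hik : i.1 + 1 < k
    · have hdi := hdpos i hik
      have hlt2 : e i < e ⟨i.1 + 1, hik⟩ := heMono (by rw [Fin.lt_def]; simp)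
      have hprim : ¬ inPrimary A p.1 := fun hpr => hnotP (hPmem.2 ⟨by omega, by omega, hpr⟩)
      have hmem1 : inPrimary A (e ⟨i.1 + 1, hik⟩) := (hPmem.1 (heMem _)).2.2
      have hnin := no_primary_inside hS hp hprim hmem1
      have hne : p.2 ≠ e ⟨i.1 + 1, hik⟩ := by
        intro heq
        apply hnotP
        refine (hPboth p hp).2 ?_
        rw [heq]
        exact heMem _
      by_cases hcase : e ⟨i.1 + 1, hik⟩ < p.2
      · exact absurd ⟨by omega, hcase⟩ hnin
      · omega
    · have hdi := hdneg i hik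
      have := hentop i
      omega
  set ff : Fin k → Arcs :=
    fun i => mapArcs (fun x => x - e i) (A.filter (fun p => e i < p.1 ∧ p.1 ≤ e i + d i))
    with hff
  have hfz : ∀ i, ff i ∈ Zset (d i) := by
    intro i
    rw [mem_Zset, isZigzag_iff]
    have hGend : ∀ p ∈ A.filter (fun p => e i < p.1 ∧ p.1 ≤ e i + d i),
        p.1 ∈ {x | e i < x} ∧ p.2 ∈ {x | e i < x} := by
      intro p hp
      have h2 := (Finset.mem_filter.1 hp).2
      have h3 := (hD p (Finset.mem_filter.1 hp).1).2.1
      exact ⟨h2.1, by simp only [Set.mem_setOf_eq]; omega⟩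
    have hmono : ∀ a ∈ {x | e i < x}, ∀ b ∈ {x | e i < x}, a < b → a - e i < b - e i := by
      intro a ha b hb h
      simp only [Set.mem_setOf_eq] at ha hb
      omega
    constructor
    · intro q hq
      simp only [hff] at hq
      obtain ⟨p, hp, rfl⟩ := mem_mapArcs.1 hq
      have hpA := (Finset.mem_filter.1 hp).1
      have hpc := (Finset.mem_filter.1 hp).2
      have hD2 := hD p hpA
      have hbound := (hGpartP i p hpA hpc.1 hpc.2).2
      simp only
      omega
    · exact ZigCore_mapArcs hmono hGend
        (ZigCore_subset (Finset.filter_subset _ _) (isZigzag_iff.1 hAz).2)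
  refine ⟨k, Bb, d, ff, hk1, hkn, mem_Cset.2 ⟨hBzig, hBconn⟩, hsum, hfz, ?_⟩
  have hEeq : mapArcs (posF k d) Bb = Ppart := by
    rw [hBb, mapArcs_comp]
    apply mapArcs_id_of
    intro p hp
    obtain ⟨h1, h2⟩ := hPpart_mem p hp
    rw [Finset.mem_coe] at h1 h2
    constructor
    · obtain ⟨j, hj⟩ := heSurj _ h1
      rw [← hj, hrke j]
      have h := hpose j.1 j.isLt
      simpa using h
    · obtain ⟨j, hj⟩ := heSurj _ h2
      rw [← hj, hrke j]
      have h := hpose j.1 j.isLt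
      simpa using h
  have hGeq : ∀ i : Fin k, mapArcs (· + posF k d (i.1 + 1)) (ff i)
      = A.filter (fun p => e i < p.1 ∧ p.1 ≤ e i + d i) := by
    intro i
    have hci : posF k d (i.1 + 1) = e i := by
      have h := hpose i.1 i.isLt
      simpa using h
    rw [hci, hff]
    simp only
    rw [mapArcs_comp]
    apply mapArcs_id_of
    intro p hp
    have h2 := (Finset.mem_filter.1 hp).2
    have h3 := (hD p (Finset.mem_filter.1 hp).1).2.1
    constructor
    · show p.1 - e i + e i = p.1
      omega
    · show p.2 - e i + e i = p.2
      omega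
  show mapArcs (posF k d) Bb ∪ _ = A
  rw [hEeq, Finset.biUnion_congr rfl (fun i _ => hGeq i)]
  apply Finset.Subset.antisymm
  · intro p hp
    rcases Finset.mem_union.1 hp with h | h
    · exact (Finset.mem_filter.1 h).1
    · obtain ⟨i, -, h⟩ := Finset.mem_biUnion.1 h
      exact (Finset.mem_filter.1 h).1
  · intro p hp
    by_cases hp1 : p.1 ∈ P
    · exact Finset.mem_union_left _ (Finset.mem_filter.2 ⟨hp, hp1⟩)
    · obtain ⟨g1, g2, g3⟩ := hD p hp
      have hne : (Finset.univ.filter (fun j : Fin k => e j < p.1)).Nonempty := by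
        refine ⟨⟨0, hk1⟩, ?_⟩
        simp only [Finset.mem_filter, Finset.mem_univ, true_and, he0]
        rcases Nat.lt_or_ge 1 p.1 with h | h
        · exact h
        · exfalso
          apply hp1
          have hq : p.1 = 1 := by omega
          rw [hq]
          exact h1P
      set j := (Finset.univ.filter (fun j : Fin k => e j < p.1)).max' hne with hj
      have hjlt : e j < p.1 := by
        have hm := Finset.max'_mem _ hne
        rw [← hj] at hm
        exact (Finset.mem_filter.1 hm).2
      have hjmax : ∀ j' : Fin k, e j' < p.1 → j' ≤ j :=
        fun j' hj' => Finset.le_max' (Finset.univ.filter (fun j : Fin k => e j < p.1)) j'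
          (Finset.mem_filter.2 ⟨Finset.mem_univ j', hj'⟩)
      have hple : p.1 ≤ e j + d j := by
        by_cases hik : j.1 + 1 < k
        · have hdj := hdpos j hik
          have hnext : ¬ e ⟨j.1 + 1, hik⟩ < p.1 := by
            intro hcon
            have h := hjmax _ hcon
            rw [Fin.le_def] at h
            simp only at h
            omega
          have hnoteq : e ⟨j.1 + 1, hik⟩ ≠ p.1 := by
            intro hcon
            apply hp1
            rw [← hcon]
            exact heMem _
          have hlt2 : e j < e ⟨j.1 + 1, hik⟩ := heMono (by rw [Fin.lt_def]; simp)
          omega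
        · have hdj := hdneg j hik
          have := hentop j
          omega
      exact Finset.mem_union_right _ (Finset.mem_biUnion.2 ⟨j, Finset.mem_univ _,
        Finset.mem_filter.2 ⟨hp, hjlt, hple⟩⟩)

/-! ### injectivity -/

theorem psi_inj {n k k' : ℕ} {B B' : Arcs} {d : Fin k → ℕ} {d' : Fin k' → ℕ}
    {f : Fin k → Arcs} {f' : Fin k' → Arcs}
    (hk1 : 1 ≤ k) (hsum : k + ∑ i, d i = n)
    (hB : IsZigzag k B) (hBc : ConnectedOn k B) (hf : ∀ i, IsZigzag (d i) (f i))
    (hk1' : 1 ≤ k') (hsum' : k' + ∑ i, d' i = n)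
    (hB' : IsZigzag k' B') (hBc' : ConnectedOn k' B') (hf' : ∀ i, IsZigzag (d' i) (f' i))
    (heq : psi k B d f = psi k' B' d' f') :
    (⟨k, B, d, f⟩ : Σ m : ℕ, Arcs × Σ _ : Fin m → ℕ, Fin m → Arcs) = ⟨k', B', d', f'⟩ := by
  have hP1 := psi_primary hk1 hsum hB hBc hf
  have hP2 := psi_primary hk1' hsum' hB' hBc' hf'
  rw [← heq] at hP2
  have hkk : k = k' := by
    have c1 : ((Finset.Icc 1 k).image (posF k d)).card = k := by
      rw [Finset.card_image_of_injective _ (posF_strictMono k d).injective, Nat.card_Icc]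
      omega
    have c2 : ((Finset.Icc 1 k').image (posF k' d')).card = k' := by
      rw [Finset.card_image_of_injective _ (posF_strictMono k' d').injective, Nat.card_Icc]
      omega
    rw [← hP1] at c1
    rw [← hP2] at c2
    omega
  subst hkk
  have hQc : ((Finset.Icc 1 n).filter (inPrimary (psi k B d f))).card = k := by
    rw [hP1, Finset.card_image_of_injective _ (posF_strictMono k d).injective, Nat.card_Icc]
    omega
  have hu1 : (fun j : Fin k => posF k d (j.1 + 1))
      = ((Finset.Icc 1 n).filter (inPrimary (psi k B d f))).orderEmbOfFin hQc := by
    apply Finset.orderEmbOfFin_unique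
    · intro x
      rw [hP1]
      exact Finset.mem_image.2 ⟨x.1 + 1, Finset.mem_Icc.2 ⟨by omega, by omega⟩, rfl⟩
    · intro a b hab
      exact posF_strictMono k d (by rw [Fin.lt_def] at hab; omega)
  have hu2 : (fun j : Fin k => posF k d' (j.1 + 1))
      = ((Finset.Icc 1 n).filter (inPrimary (psi k B d f))).orderEmbOfFin hQc := by
    apply Finset.orderEmbOfFin_unique
    · intro x
      rw [hP2]
      exact Finset.mem_image.2 ⟨x.1 + 1, Finset.mem_Icc.2 ⟨by omega, by omega⟩, rfl⟩
    · intro a b hab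
      exact posF_strictMono k d' (by rw [Fin.lt_def] at hab; omega)
  have hpp : ∀ j : Fin k, posF k d (j.1 + 1) = posF k d' (j.1 + 1) := by
    intro j
    have h := congrFun (hu1.trans hu2.symm) j
    simpa using h
  have hppS : ∀ j, 1 ≤ j → j ≤ k + 1 → posF k d j = posF k d' j := by
    intro j h1 h2
    rcases Nat.lt_or_ge j (k + 1) with h | h
    · have hj : j - 1 < k := by omega
      have hh := hpp ⟨j - 1, hj⟩
      simpa [show j - 1 + 1 = j by omega] using hh
    · have hjk : j = k + 1 := by omega
      subst hjk
      rw [posF_top, posF_top]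
      omega
  have hdd : d = d' := by
    funext i
    have e1 := posF_fin k d i
    have e2 := posF_fin k d' i
    have q1 := hppS (i.1 + 1) (by omega) (by omega)
    have q2 := hppS (i.1 + 2) (by omega) (by omega)
    omega
  subst hdd
  have hBB : B = B' := by
    have g1 := psi_epart (d := d) (f := f) hB hf
    have g2 := psi_epart (d := d) (f := f') hB' hf'
    rw [← heq] at g2
    have himg : mapArcs (posF k d) B = mapArcs (posF k d) B' := by rw [← g1, ← g2]
    have hinj : Function.Injective (fun p : ℕ × ℕ => (posF k d p.1, posF k d p.2)) := by
      intro p q h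
      have h1 := congrArg Prod.fst h
      have h2 := congrArg Prod.snd h
      simp only at h1 h2
      exact Prod.ext ((posF_strictMono k d).injective h1) ((posF_strictMono k d).injective h2)
    exact Finset.image_injective hinj himg
  subst hBB
  have hffeq : f = f' := by
    funext i
    have g1 := psi_gpart (B := B) (d := d) hB hf i
    have g2 := psi_gpart (B := B) (d := d) hB' hf' i
    rw [← heq] at g2
    have himg : mapArcs (· + posF k d (i.1 + 1)) (f i)
        = mapArcs (· + posF k d (i.1 + 1)) (f' i) := by rw [← g1, ← g2]
    have hinj : Function.Injective
        (fun p : ℕ × ℕ => (p.1 + posF k d (i.1 + 1), p.2 + posF k d (i.1 + 1))) := by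
      intro p q h
      have h1 := congrArg Prod.fst h
      have h2 := congrArg Prod.snd h
      simp only at h1 h2
      exact Prod.ext (by omega) (by omega)
    exact Finset.image_injective hinj himg
  subst hffeq
  rfl

end Aux

/-- the recurrence
`z(n) = Σ_{k=1}^n c_k Σ_{d₁+⋯+d_k=n−k} z(d₁)⋯z(d_k)` for `n ≥ 1`. -/
theorem zigzag_count_recurrence (n : ℕ) (hn : 1 ≤ n) :
    zigzagCount n =
      ∑ k ∈ Finset.Icc 1 n, connZigzagCount k *
        ∑ d ∈ Finset.Nat.antidiagonalTuple k (n - k), ∏ i, zigzagCount (d i) := by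
  classical
  rw [zigzagCount_eq]
  have hR : ∑ k ∈ Finset.Icc 1 n, connZigzagCount k *
        ∑ d ∈ Finset.Nat.antidiagonalTuple k (n - k), ∏ i, zigzagCount (d i)
      = ∑ k ∈ Finset.Icc 1 n, (Cset k).card *
        ∑ d ∈ Finset.Nat.antidiagonalTuple k (n - k), ∏ i, (Zset (d i)).card := by
    refine Finset.sum_congr rfl fun k _ => ?_
    rw [connZigzagCount_eq]
    congr 1
    refine Finset.sum_congr rfl fun dd _ => ?_
    exact Finset.prod_congr rfl fun i _ => zigzagCount_eq _
  rw [hR]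
  have hT : ((Finset.Icc 1 n).sigma fun k => (Cset k) ×ˢ
        ((Finset.Nat.antidiagonalTuple k (n - k)).sigma fun d =>
          Fintype.piFinset fun i => Zset (d i))).card
      = ∑ k ∈ Finset.Icc 1 n, (Cset k).card *
        ∑ d ∈ Finset.Nat.antidiagonalTuple k (n - k), ∏ i, (Zset (d i)).card := by
    rw [Finset.card_sigma]
    refine Finset.sum_congr rfl fun k _ => ?_
    rw [Finset.card_product, Finset.card_sigma]
    congr 1
    refine Finset.sum_congr rfl fun dd _ => ?_
    rw [Fintype.card_piFinset]
  rw [← hT]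
  have hmemT : ∀ t : Σ m : ℕ, Arcs × Σ _ : Fin m → ℕ, Fin m → Arcs,
      t ∈ ((Finset.Icc 1 n).sigma fun k => (Cset k) ×ˢ
        ((Finset.Nat.antidiagonalTuple k (n - k)).sigma fun d =>
          Fintype.piFinset fun i => Zset (d i)))
      ↔ (1 ≤ t.1 ∧ t.1 ≤ n ∧ t.2.1 ∈ Cset t.1 ∧ t.1 + ∑ i, t.2.2.1 i = n ∧
          ∀ i, t.2.2.2 i ∈ Zset (t.2.2.1 i)) := by
    rintro ⟨k, B, dd, ff⟩
    simp only [Finset.mem_sigma, Finset.mem_product, Finset.mem_Icc,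
      Finset.Nat.mem_antidiagonalTuple, Fintype.mem_piFinset]
    constructor
    · rintro ⟨⟨h1, h2⟩, h3, h4, h5⟩
      refine ⟨h1, h2, h3, ?_, h5⟩
      rw [h4]
      exact Nat.add_sub_cancel' h2
    · rintro ⟨h1, h2, h3, h4, h5⟩
      refine ⟨⟨h1, h2⟩, h3, ?_, h5⟩
      rw [← h4, Nat.add_sub_cancel_left]
  symm
  apply Finset.card_bij (fun (t : Σ m : ℕ, Arcs × Σ _ : Fin m → ℕ, Fin m → Arcs) _ =>
    psi t.1 t.2.1 t.2.2.1 t.2.2.2)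
  · intro t ht
    obtain ⟨h1, h2, h3, h4, h5⟩ := (hmemT t).1 ht
    exact psi_mem_Zset h1 h4 (mem_Cset.1 h3).1 (fun i => mem_Zset.1 (h5 i))
  · intro a ha b hb hab
    obtain ⟨a1, a2, a3, a4, a5⟩ := (hmemT a).1 ha
    obtain ⟨b1, b2, b3, b4, b5⟩ := (hmemT b).1 hb
    obtain ⟨ka, Ba, da, fa⟩ := a
    obtain ⟨kb, Bb, db, fb⟩ := b
    exact psi_inj a1 a4 (mem_Cset.1 a3).1 (mem_Cset.1 a3).2 (fun i => mem_Zset.1 (a5 i))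
      b1 b4 (mem_Cset.1 b3).1 (mem_Cset.1 b3).2 (fun i => mem_Zset.1 (b5 i)) hab
  · intro A hA
    obtain ⟨k, B, d, f, hk1, hkn, hBC, hsum, hfz, hpsi⟩ := psi_surj hn hA
    refine ⟨(⟨k, B, d, f⟩ : Σ m : ℕ, Arcs × Σ _ : Fin m → ℕ, Fin m → Arcs), ?_, hpsi⟩
    refine (hmemT ⟨k, B, d, f⟩).2 ⟨hk1, hkn, hBC, ?_, hfz⟩
    rw [hsum]
    exact Nat.add_sub_cancel' hkn
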